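/- For every positive integer n that is a multiple of 3, there exists an orientation of the n-dimensional hypercube graph Q_n that is a (2,3)-cordial digraph; that is, Q_n is (2,3)-orientable for every n divisible by 3. -/

import Mathlib

open Finset

/-- The induced arc label: `g(u→v) = f(v) - f(u)`, as an integer. -/
def arcLabel {V : Type*} (f : V → Fin 2) (p : V × V) : ℤ :=
  (f p.2 : ℤ) - (f p.1 : ℤ)

/-- The number of arcs of `A` receiving induced label `i` from the vertex labeling `f`. -/
def labelCount {V : Type*} (A : Finset (V × V)) (f : V → Fin 2) (i : ℤ) : ℕ :=
  (A.filter (fun p => arcLabel f p = i)).card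

/-- A `(0,1)`-labeling is friendly if `-1 ≤ |f⁻¹(0)| - |f⁻¹(1)| ≤ 1`. -/
def Friendly {V : Type*} [Fintype V] (f : V → Fin 2) : Prop :=
  -1 ≤ (((univ.filter (fun v => f v = 0)).card : ℤ) -
        ((univ.filter (fun v => f v = 1)).card : ℤ)) ∧
  (((univ.filter (fun v => f v = 0)).card : ℤ) -
        ((univ.filter (fun v => f v = 1)).card : ℤ)) ≤ 1

/-- A digraph (given by its arc set `A`) is `(2,3)`-cordial if some friendly vertex
labeling induces an arc labeling in which the counts of labels `-1, 0, 1`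
pairwise differ by at most one. -/
def Cordial23 {V : Type*} [Fintype V] (A : Finset (V × V)) : Prop :=
  ∃ f : V → Fin 2, Friendly f ∧
    ∀ i ∈ ({-1, 0, 1} : Finset ℤ), ∀ j ∈ ({-1, 0, 1} : Finset ℤ),
      -1 ≤ ((labelCount A f i : ℤ) - (labelCount A f j : ℤ)) ∧
      ((labelCount A f i : ℤ) - (labelCount A f j : ℤ)) ≤ 1

/-- `A` has no digons (in particular, no loops). -/
def NoDigons {V : Type*} (A : Finset (V × V)) : Prop :=
  ∀ u v : V, (u, v) ∈ A → (v, u) ∉ A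

/-- `A` is an orientation of the (symmetric, irreflexive) adjacency `Adj`:
every arc is along an edge, and each edge gets exactly one direction. -/
def IsOrientation {V : Type*} (Adj : V → V → Prop) (A : Finset (V × V)) : Prop :=
  (∀ p ∈ A, Adj p.1 p.2) ∧ ∀ u v : V, Adj u v → (((u, v) ∈ A) ↔ ((v, u) ∉ A))

/-- Adjacency in the `n`-dimensional hypercube graph `Q_n` on vertex set `{0,1}^n`:
two vertices are adjacent iff they differ in exactly one coordinate. -/
def hammingAdj {n : ℕ} (u v : Fin n → Fin 2) : Prop :=
  (Finset.univ.filter (fun i => u i ≠ v i)).card = 1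

section Aux

variable {n : ℕ}

/-- Flip coordinate `i`. -/
def flipC (i : Fin n) (v : Fin n → Fin 2) : Fin n → Fin 2 :=
  Function.update v i (v i + 1)

lemma flipC_self (i : Fin n) (v : Fin n → Fin 2) : flipC i v i = v i + 1 :=
  Function.update_self _ _ _

lemma flipC_ne {i j : Fin n} (h : j ≠ i) (v : Fin n → Fin 2) : flipC i v j = v j :=
  Function.update_of_ne h _ _

lemma fin2_aa (x : Fin 2) : x + 1 + 1 = x := by revert x; decide

lemma flipC_flipC (i : Fin n) (v : Fin n → Fin 2) : flipC i (flipC i v) = v := by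
  funext j
  by_cases h : j = i
  · subst h; rw [flipC_self, flipC_self, fin2_aa]
  · rw [flipC_ne h, flipC_ne h]

/-- weight of a vertex -/
def wt (v : Fin n → Fin 2) : ℕ := ∑ i, (v i : ℕ)

end Aux
section Aux2

variable {n : ℕ}

instance hammingAdj.dec (u v : Fin n → Fin 2) : Decidable (hammingAdj u v) := by
  unfold hammingAdj; infer_instance

lemma hammingAdj_symm {u v : Fin n → Fin 2} (h : hammingAdj u v) : hammingAdj v u := by
  unfold hammingAdj at *
  rw [show (univ.filter (fun i => v i ≠ u i)) = (univ.filter (fun i => u i ≠ v i)) by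
    apply filter_congr; intro i _; simp [ne_comm]]
  exact h

lemma hammingAdj_exists {u v : Fin n → Fin 2} (h : hammingAdj u v) :
    ∃ i : Fin n, u i ≠ v i ∧ ∀ j : Fin n, j ≠ i → u j = v j := by
  unfold hammingAdj at h
  obtain ⟨i, hi⟩ := Finset.card_eq_one.mp h
  refine ⟨i, ?_, ?_⟩
  · have : i ∈ univ.filter (fun i => u i ≠ v i) := hi ▸ Finset.mem_singleton_self i
    simpa using this
  · intro j hj
    by_contra hne
    have : j ∈ univ.filter (fun i => u i ≠ v i) := by simpa using hne
    rw [hi, Finset.mem_singleton] at this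
    exact hj this

lemma hammingAdj_flipC {u : Fin n → Fin 2} {i : Fin n} : hammingAdj u (flipC i u) := by
  unfold hammingAdj
  rw [Finset.card_eq_one]
  refine ⟨i, ?_⟩
  ext j
  simp only [Finset.mem_filter, Finset.mem_univ, true_and, Finset.mem_singleton]
  constructor
  · intro hj; by_contra hne; exact hj (flipC_ne hne u).symm
  · rintro rfl; rw [flipC_self]
    generalize u j = x; revert x; decide

lemma wt_split (u : Fin n → Fin 2) (i : Fin n) :
    wt u = (u i : ℕ) + ∑ j ∈ univ.erase i, (u j : ℕ) :=
  (Finset.add_sum_erase univ _ (mem_univ i)).symm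

lemma wt_ne {u v : Fin n → Fin 2} (h : hammingAdj u v) : wt u ≠ wt v := by
  obtain ⟨i, hne, hoff⟩ := hammingAdj_exists h
  rw [wt_split u i, wt_split v i,
    show ∑ j ∈ univ.erase i, (u j : ℕ) = ∑ j ∈ univ.erase i, (v j : ℕ) from
      Finset.sum_congr rfl fun j hj => by rw [hoff j (Finset.ne_of_mem_erase hj)]]
  intro hcontra
  exact hne (Fin.val_injective (by omega))

lemma arc_char {u v : Fin n → Fin 2} (h : hammingAdj u v) (hw : wt u < wt v) :
    ∃ i : Fin n, u i = 0 ∧ v = flipC i u := by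
  obtain ⟨i, hne, hoff⟩ := hammingAdj_exists h
  have hsum : ∑ j ∈ univ.erase i, (u j : ℕ) = ∑ j ∈ univ.erase i, (v j : ℕ) :=
    Finset.sum_congr rfl fun j hj => by rw [hoff j (Finset.ne_of_mem_erase hj)]
  have hwu := wt_split u i
  have hwv := wt_split v i
  have hui : u i = 0 := by
    by_contra hui
    have h1 : u i = 1 := by revert hui; generalize u i = x; revert x; decide
    have h0 : v i = 0 := by
      revert hne; rw [h1]; generalize v i = y; revert y; decide
    rw [h1] at hwu; rw [h0] at hwv
    simp at hwu hwv
    omega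
  have hvi : v i = 1 := by
    revert hne; rw [hui]; generalize v i = y; revert y; decide
  refine ⟨i, hui, ?_⟩
  funext j
  by_cases hj : j = i
  · subst hj; rw [flipC_self, hui, hvi]; rfl
  · rw [flipC_ne hj, hoff j hj]

lemma wt_flipC {u : Fin n → Fin 2} {i : Fin n} (h : u i = 0) :
    wt (flipC i u) = wt u + 1 := by
  rw [wt_split u i, wt_split (flipC i u) i, flipC_self, h,
    show ∑ j ∈ univ.erase i, ((flipC i u) j : ℕ) = ∑ j ∈ univ.erase i, (u j : ℕ) from
      Finset.sum_congr rfl fun j hj => by rw [flipC_ne (Finset.ne_of_mem_erase hj)]]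
  simp
  omega

end Aux2

section Aux3

variable {n : ℕ}

/-- Parity of the first `k` coordinates. -/
def lab (k : ℕ) (v : Fin n → Fin 2) : Fin 2 :=
  ∑ i ∈ univ.filter (fun i : Fin n => (i : ℕ) < k), v i

lemma fin2_cases (x : Fin 2) : x = 0 ∨ x = 1 := by revert x; decide

lemma lab_flipC_mem {k : ℕ} {i : Fin n} (hi : (i : ℕ) < k) (v : Fin n → Fin 2) :
    lab k (flipC i v) = lab k v + 1 := by
  have hiS : i ∈ univ.filter (fun j : Fin n => (j : ℕ) < k) := by simp [hi]
  unfold lab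
  rw [← Finset.add_sum_erase _ _ hiS, ← Finset.add_sum_erase _ (fun j => v j) hiS,
    flipC_self,
    show ∑ j ∈ (univ.filter (fun j : Fin n => (j : ℕ) < k)).erase i, flipC i v j
        = ∑ j ∈ (univ.filter (fun j : Fin n => (j : ℕ) < k)).erase i, v j from
      Finset.sum_congr rfl fun j hj => flipC_ne (Finset.ne_of_mem_erase hj) v]
  exact add_right_comm _ _ _

lemma lab_flipC_not_mem {k : ℕ} {i : Fin n} (hi : ¬ (i : ℕ) < k) (v : Fin n → Fin 2) :
    lab k (flipC i v) = lab k v := by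
  unfold lab
  refine Finset.sum_congr rfl fun j hj => ?_
  have hj' : (j : ℕ) < k := by simpa using hj
  exact flipC_ne (by rintro rfl; exact hi hj') v

lemma card_filter_prod {α β : Type*} [Fintype α] [Fintype β] [DecidableEq α]
    (p : α × β → Prop) [DecidablePred p] :
    (univ.filter p).card = ∑ a : α, (univ.filter fun b => p (a, b)).card := by
  rw [Finset.card_eq_sum_card_fiberwise (f := Prod.fst) (t := univ) (fun x _ => mem_univ _)]
  refine Finset.sum_congr rfl fun a _ => ?_
  refine Finset.card_nbij' (fun q => q.2) (fun b => (a, b)) ?_ ?_ ?_ ?_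
  · rintro ⟨x, y⟩ hq
    simp only [Finset.mem_coe, Finset.mem_filter, Finset.mem_univ, true_and] at hq ⊢
    rcases hq with ⟨hp, rfl⟩; exact hp
  · intro b hb
    simp only [Finset.mem_coe, Finset.mem_filter, Finset.mem_univ, true_and] at hb ⊢
    exact ⟨hb, trivial⟩
  · rintro ⟨x, y⟩ hq
    simp only [Finset.mem_coe, Finset.mem_filter, Finset.mem_univ, true_and] at hq
    simp [hq.2]
  · intro b _; rfl

lemma two_mul_card_coord (i : Fin n) :
    2 * (univ.filter fun u : Fin n → Fin 2 => u i = 0).card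
      = Fintype.card (Fin n → Fin 2) := by
  have h01 : (univ.filter fun u : Fin n → Fin 2 => u i = 0).card
      = (univ.filter fun u : Fin n → Fin 2 => ¬ u i = 0).card := by
    refine Finset.card_nbij' (flipC i) (flipC i) ?_ ?_ ?_ ?_
    · intro u hu
      simp only [Finset.mem_coe, Finset.mem_filter, Finset.mem_univ, true_and] at hu ⊢
      rw [flipC_self, hu]; decide
    · intro u hu
      simp only [Finset.mem_coe, Finset.mem_filter, Finset.mem_univ, true_and] at hu ⊢
      rw [flipC_self]
      revert hu; generalize u i = x; revert x; decide
    · intro u _; exact flipC_flipC i u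
    · intro u _; exact flipC_flipC i u
  have h2 := Finset.card_filter_add_card_filter_not
    (p := fun u : Fin n → Fin 2 => u i = 0) (s := univ)
  rw [Finset.card_univ] at h2
  rw [two_mul]
  nth_rewrite 2 [h01]
  exact h2

lemma two_mul_card_coord_lab {k : ℕ} (hk2 : 2 ≤ k) (hkn : k < n) (i : Fin n)
    (hi : (i : ℕ) < k) :
    2 * (univ.filter fun u : Fin n → Fin 2 => u i = 0 ∧ lab k u = 0).card
      = (univ.filter fun u : Fin n → Fin 2 => u i = 0).card := by
  have h1n : (if (i : ℕ) = 0 then 1 else 0) < n := by split <;> omega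
  set j : Fin n := ⟨if (i : ℕ) = 0 then 1 else 0, h1n⟩ with hjdef
  have hjv : (j : ℕ) = if (i : ℕ) = 0 then 1 else 0 := rfl
  have hjk : (j : ℕ) < k := by rw [hjv]; split <;> omega
  have hij : i ≠ j := by
    intro h
    apply_fun Fin.val at h
    rw [hjv] at h
    by_cases h0 : (i : ℕ) = 0
    · rw [if_pos h0] at h; omega
    · rw [if_neg h0] at h; omega
  have key : (univ.filter fun u : Fin n → Fin 2 => u i = 0 ∧ lab k u = 0).card
      = (univ.filter fun u : Fin n → Fin 2 => u i = 0 ∧ ¬ lab k u = 0).card := by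
    refine Finset.card_nbij' (flipC j) (flipC j) ?_ ?_ ?_ ?_
    · intro u hu
      simp only [Finset.mem_coe, Finset.mem_filter, Finset.mem_univ, true_and] at hu ⊢
      refine ⟨by rw [flipC_ne hij]; exact hu.1, ?_⟩
      rw [lab_flipC_mem hjk, hu.2]; decide
    · intro u hu
      simp only [Finset.mem_coe, Finset.mem_filter, Finset.mem_univ, true_and] at hu ⊢
      refine ⟨by rw [flipC_ne hij]; exact hu.1, ?_⟩
      rw [lab_flipC_mem hjk]
      revert hu
      generalize lab k u = x
      revert x; intro x
      rintro ⟨-, hx⟩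
      rcases fin2_cases x with rfl | rfl
      · exact absurd rfl hx
      · decide
    · intro u _; exact flipC_flipC j u
    · intro u _; exact flipC_flipC j u
  have hsplit := Finset.card_filter_add_card_filter_not
    (p := fun u : Fin n → Fin 2 => lab k u = 0)
    (s := univ.filter fun u : Fin n → Fin 2 => u i = 0)
  rw [Finset.filter_filter, Finset.filter_filter] at hsplit
  rw [two_mul]
  nth_rewrite 2 [key]
  exact hsplit


lemma card_filter_val_lt {K : ℕ} (hK : K < n) :
    (univ.filter fun i : Fin n => (i : ℕ) < K).card = K := by
  have : (univ.filter fun i : Fin n => (i : ℕ) < K) = Finset.Iio (⟨K, hK⟩ : Fin n) := by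
    ext j; simp [Fin.lt_def]
  rw [this, Fin.card_Iio]

lemma card_filter_val_not_lt {K : ℕ} (hK : K < n) :
    (univ.filter fun i : Fin n => ¬ (i : ℕ) < K).card = n - K := by
  have h := Finset.card_filter_add_card_filter_not
    (p := fun i : Fin n => (i : ℕ) < K) (s := univ)
  rw [Finset.card_univ, Fintype.card_fin, card_filter_val_lt hK] at h
  omega

lemma card_coord_all_eq {i j : Fin n} :
    (univ.filter fun u : Fin n → Fin 2 => u i = 0).card
      = (univ.filter fun u : Fin n → Fin 2 => u j = 0).card :=
  Nat.eq_of_mul_eq_mul_left (by norm_num)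
    ((two_mul_card_coord i).trans (two_mul_card_coord j).symm)

end Aux3

/-- For every positive multiple of 3 there is a `(2,3)`-cordial orientation of
the hypercube `Q_n`. -/
theorem hypercube_multiple_of_three_orientable (n : ℕ) (hn : 0 < n) (h3 : n % 3 = 0) :
    ∃ A : Finset ((Fin n → Fin 2) × (Fin n → Fin 2)),
      IsOrientation hammingAdj A ∧ Cordial23 A := by
  classical
  have hk : n = 3 * (n / 3) := by omega
  set k := n / 3 with hkdef
  have hk1 : 1 ≤ k := by omega
  set K := 2 * k with hKdef
  have hKn : K < n := by omega
  have hK2 : 2 ≤ K := by omega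
  have h0K : (0 : ℕ) < K := by omega
  have h1K : (1 : ℕ) < K := by omega
  have h1n' : (1 : ℕ) < n := by omega
  have hnk : n - K = k := by omega
  have hifn : ∀ m : ℕ, (if m = 0 then 1 else 0) < n := by intro m; split <;> omega
  have hifK : ∀ m : ℕ, (if m = 0 then 1 else 0) < K := by intro m; split <;> omega
  set A : Finset ((Fin n → Fin 2) × (Fin n → Fin 2)) :=
    univ.filter (fun p => hammingAdj p.1 p.2 ∧ wt p.1 < wt p.2) with hA
  have memA : ∀ u v : Fin n → Fin 2, ((u, v) ∈ A) ↔ (hammingAdj u v ∧ wt u < wt v) := by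
    intro u v; simp [hA]
  refine ⟨A, ⟨?_, ?_⟩, ?_⟩
  · rintro ⟨u, v⟩ hp
    exact ((memA u v).mp hp).1
  · intro u v hadj
    constructor
    · intro huv hvu
      have h1 := ((memA u v).mp huv).2
      have h2 := ((memA v u).mp hvu).2
      omega
    · intro hvu
      rw [memA]
      refine ⟨hadj, ?_⟩
      have hne := wt_ne hadj
      have hlt : ¬ (wt v < wt u) := fun h => hvu ((memA v u).mpr ⟨hammingAdj_symm hadj, h⟩)
      omega
  -- Cordiality
  set f : (Fin n → Fin 2) → Fin 2 := lab K with hf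
  have hfflip : ∀ (i : Fin n), (i : ℕ) < K → ∀ v, f (flipC i v) = f v + 1 :=
    fun i hi v => lab_flipC_mem hi v
  have hfflip' : ∀ (i : Fin n), ¬ (i : ℕ) < K → ∀ v, f (flipC i v) = f v :=
    fun i hi v => lab_flipC_not_mem hi v
  refine ⟨f, ?_, ?_⟩
  · -- Friendly
    have hcard : (univ.filter fun v : Fin n → Fin 2 => f v = 0).card
        = (univ.filter fun v : Fin n → Fin 2 => f v = 1).card := by
      refine Finset.card_nbij' (flipC ⟨0, hn⟩) (flipC ⟨0, hn⟩) ?_ ?_ ?_ ?_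
      · intro v hv
        simp only [Finset.mem_coe, Finset.mem_filter, Finset.mem_univ, true_and] at hv ⊢
        rw [hfflip ⟨0, hn⟩ h0K, hv]; decide
      · intro v hv
        simp only [Finset.mem_coe, Finset.mem_filter, Finset.mem_univ, true_and] at hv ⊢
        rw [hfflip ⟨0, hn⟩ h0K]
        rw [hv]; decide
      · intro v _; exact flipC_flipC _ v
      · intro v _; exact flipC_flipC _ v
    rw [Friendly, hcard]
    constructor <;> simp
  · -- balanced arc counts
    have hcount : ∀ c : ℤ, labelCount A f c
        = (univ.filter fun q : Fin n × (Fin n → Fin 2) =>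
            q.2 q.1 = 0 ∧ arcLabel f (q.2, flipC q.1 q.2) = c).card := by
      intro c
      unfold labelCount
      symm
      refine Finset.card_bij (fun q _ => (q.2, flipC q.1 q.2)) ?_ ?_ ?_
      · rintro ⟨i, u⟩ hq
        simp only [Finset.mem_filter, Finset.mem_univ, true_and] at hq
        rw [Finset.mem_filter]
        refine ⟨(memA _ _).mpr ⟨hammingAdj_flipC, ?_⟩, hq.2⟩
        show wt u < wt (flipC i u)
        rw [wt_flipC hq.1]; omega
      · rintro ⟨i, u⟩ h1 ⟨i', u'⟩ h2 heq
        simp only [Finset.mem_filter, Finset.mem_univ, true_and] at h1 h2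
        have hu : u = u' := congrArg Prod.fst heq
        subst hu
        have hfl : flipC i u = flipC i' u := congrArg Prod.snd heq
        by_cases hii : i = i'
        · subst hii; rfl
        · exfalso
          have := congrFun hfl i
          rw [flipC_self, flipC_ne hii] at this
          revert this; generalize u i = x; revert x; decide
      · rintro ⟨u, v⟩ hb
        rw [Finset.mem_filter] at hb
        obtain ⟨hA', hl⟩ := hb
        obtain ⟨hadj, hw⟩ := (memA u v).mp hA'
        obtain ⟨i, hui, rfl⟩ := arc_char hadj hw
        refine ⟨(i, u), ?_, rfl⟩
        simp only [Finset.mem_filter, Finset.mem_univ, true_and]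
        exact ⟨hui, hl⟩
    have hval : ∀ (i : Fin n) (u : Fin n → Fin 2),
        arcLabel f (u, flipC i u)
          = if (i : ℕ) < K then (if f u = 0 then 1 else -1) else 0 := by
      intro i u
      show ((f (flipC i u) : Fin 2) : ℤ) - ((f u : Fin 2) : ℤ) = _
      by_cases hi : (i : ℕ) < K
      · rw [if_pos hi, hfflip i hi]
        rcases fin2_cases (f u) with h | h <;> rw [h] <;> simp
      · rw [if_neg hi, hfflip' i hi]
        simp
    -- identify the three pair sets
    have hset0 : (univ.filter fun q : Fin n × (Fin n → Fin 2) =>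
          q.2 q.1 = 0 ∧ arcLabel f (q.2, flipC q.1 q.2) = 0)
        = (univ.filter fun q : Fin n × (Fin n → Fin 2) =>
          q.2 q.1 = 0 ∧ ¬ ((q.1 : ℕ) < K)) := by
      apply Finset.filter_congr
      rintro ⟨i, u⟩ -
      rw [hval i u]
      by_cases hi : (i : ℕ) < K
      · rcases fin2_cases (f u) with h | h <;> simp [hi, h]
      · simp [hi]
    have hset1 : (univ.filter fun q : Fin n × (Fin n → Fin 2) =>
          q.2 q.1 = 0 ∧ arcLabel f (q.2, flipC q.1 q.2) = 1)
        = (univ.filter fun q : Fin n × (Fin n → Fin 2) =>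
          q.2 q.1 = 0 ∧ (((q.1 : ℕ) < K) ∧ f q.2 = 0)) := by
      apply Finset.filter_congr
      rintro ⟨i, u⟩ -
      rw [hval i u]
      by_cases hi : (i : ℕ) < K
      · rcases fin2_cases (f u) with h | h <;> simp [hi, h]
      · simp [hi]
    have hsetm : (univ.filter fun q : Fin n × (Fin n → Fin 2) =>
          q.2 q.1 = 0 ∧ arcLabel f (q.2, flipC q.1 q.2) = -1)
        = (univ.filter fun q : Fin n × (Fin n → Fin 2) =>
          q.2 q.1 = 0 ∧ (((q.1 : ℕ) < K) ∧ f q.2 = 1)) := by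
      apply Finset.filter_congr
      rintro ⟨i, u⟩ -
      rw [hval i u]
      by_cases hi : (i : ℕ) < K
      · rcases fin2_cases (f u) with h | h <;> simp [hi, h] 
      · simp [hi]
    -- the common value C
    set i0 : Fin n := ⟨0, hn⟩ with hi0
    set C : ℕ := (univ.filter fun u : Fin n → Fin 2 => u i0 = 0).card with hC
    have hCc : ∀ i : Fin n, (univ.filter fun u : Fin n → Fin 2 => u i = 0).card = C :=
      fun i => card_coord_all_eq
    -- count of the 0-label set
    have h0card : (univ.filter fun q : Fin n × (Fin n → Fin 2) =>
          q.2 q.1 = 0 ∧ ¬ ((q.1 : ℕ) < K)).card = (n - K) * C := by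
      rw [card_filter_prod]
      have hper : ∀ i : Fin n,
          (univ.filter fun u : Fin n → Fin 2 => u i = 0 ∧ ¬ ((i : ℕ) < K)).card
            = if (i : ℕ) < K then 0 else C := by
        intro i
        by_cases hi : (i : ℕ) < K
        · rw [if_pos hi, Finset.card_eq_zero]
          refine Finset.filter_false_of_mem ?_
          intro u _
          exact fun h => h.2 hi
        · rw [if_neg hi, ← hCc i]
          congr 1
          apply Finset.filter_congr
          intro u _
          simp [hi]
      rw [Finset.sum_congr rfl (fun i _ => hper i), Finset.sum_ite,
        Finset.sum_const, Finset.sum_const, card_filter_val_not_lt hKn]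
      simp [mul_comm]
    -- count of the +1-label set (times two)
    have h1card : 2 * (univ.filter fun q : Fin n × (Fin n → Fin 2) =>
          q.2 q.1 = 0 ∧ (((q.1 : ℕ) < K) ∧ f q.2 = 0)).card = K * C := by
      rw [card_filter_prod, Finset.mul_sum]
      have hper : ∀ i : Fin n,
          2 * (univ.filter fun u : Fin n → Fin 2 =>
              u i = 0 ∧ (((i : ℕ) < K) ∧ f u = 0)).card
            = if (i : ℕ) < K then C else 0 := by
        intro i
        by_cases hi : (i : ℕ) < K
        · rw [if_pos hi]
          have heq : (univ.filter fun u : Fin n → Fin 2 =>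
              u i = 0 ∧ (((i : ℕ) < K) ∧ f u = 0))
              = (univ.filter fun u : Fin n → Fin 2 => u i = 0 ∧ lab K u = 0) := by
            apply Finset.filter_congr
            intro u _
            simp [hi, hf]
          rw [heq, two_mul_card_coord_lab hK2 hKn i hi, hCc i]
        · rw [if_neg hi, Finset.card_eq_zero.mpr, mul_zero]
          refine Finset.filter_false_of_mem ?_
          intro u _
          exact fun h => hi h.2.1
      rw [Finset.sum_congr rfl (fun i _ => hper i), Finset.sum_ite,
        Finset.sum_const, Finset.sum_const, card_filter_val_lt hKn]
      simp [mul_comm]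
    -- the -1-label set has the same size as the +1-label set
    have hmeq : (univ.filter fun q : Fin n × (Fin n → Fin 2) =>
          q.2 q.1 = 0 ∧ (((q.1 : ℕ) < K) ∧ f q.2 = 1)).card
        = (univ.filter fun q : Fin n × (Fin n → Fin 2) =>
          q.2 q.1 = 0 ∧ (((q.1 : ℕ) < K) ∧ f q.2 = 0)).card := by
      set σ : Fin n → Fin n := fun i => ⟨if (i : ℕ) = 0 then 1 else 0, hifn _⟩ with hσdef
      have hσne : ∀ i : Fin n, i ≠ σ i := by
        intro i h
        apply_fun Fin.val at h
        by_cases h0 : (i : ℕ) = 0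
        · simp [hσdef, h0] at h
        · simp only [hσdef] at h
          rw [if_neg h0] at h
          exact h0 h
      have hσK : ∀ i : Fin n, ((σ i : Fin n) : ℕ) < K := fun i => hifK _
      set g : Fin n × (Fin n → Fin 2) → Fin n × (Fin n → Fin 2) :=
        fun q => (q.1, flipC (σ q.1) q.2) with hg
      have hgg : ∀ q, g (g q) = q := by
        rintro ⟨i, u⟩
        simp [hg, flipC_flipC]
      refine Finset.card_nbij' g g ?_ ?_ (fun q _ => hgg q) (fun q _ => hgg q)
      · rintro ⟨i, u⟩ hq
        simp only [Finset.mem_coe, Finset.mem_filter, Finset.mem_univ, true_and] at hq ⊢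
        obtain ⟨h1, h2, h3⟩ := hq
        refine ⟨?_, h2, ?_⟩
        · show flipC (σ i) u i = 0
          rw [flipC_ne (hσne i)]; exact h1
        · show f (flipC (σ i) u) = 0
          rw [hfflip (σ i) (hσK i), h3]; decide
      · rintro ⟨i, u⟩ hq
        simp only [Finset.mem_coe, Finset.mem_filter, Finset.mem_univ, true_and] at hq ⊢
        obtain ⟨h1, h2, h3⟩ := hq
        refine ⟨?_, h2, ?_⟩
        · show flipC (σ i) u i = 0
          rw [flipC_ne (hσne i)]; exact h1
        · show f (flipC (σ i) u) = 1
          rw [hfflip (σ i) (hσK i), h3]; decide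
    -- assemble
    have L0 : labelCount A f 0 = k * C := by
      rw [hcount 0, hset0, h0card, hnk]
    have L1 : labelCount A f 1 = k * C := by
      rw [hcount 1, hset1]
      refine Nat.eq_of_mul_eq_mul_left (show 0 < 2 by norm_num) ?_
      rw [h1card, hKdef]
      ring
    have Lm : labelCount A f (-1) = k * C := by
      rw [hcount (-1), hsetm, hmeq]
      refine Nat.eq_of_mul_eq_mul_left (show 0 < 2 by norm_num) ?_
      rw [h1card, hKdef]
      ring
    have hall : ∀ c ∈ ({-1, 0, 1} : Finset ℤ), labelCount A f c = k * C := by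
      intro c hc
      simp only [Finset.mem_insert, Finset.mem_singleton] at hc
      rcases hc with rfl | rfl | rfl
      · exact Lm
      · exact L0
      · exact L1
    intro i hi j hj
    rw [hall i hi, hall j hj]
    constructor <;> simp
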